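/- arXiv:2009.07630 — 2 statements merged into one kernel-verified Lean document; each statement's English description precedes it below -/
import Mathlib

section
/- Postoptimality: Let M be a loopless matroid and x, x' : E → ℝ two weightings differing only at a single element e. Then mwb(M,x') - mwb(M,x) = b_e(x') - b_e(x), where b_e(z) := min{z(e), μ_e(z)} is the bottleneck weight of e under z. -/
open Matroid Set

variable {α : Type*}

/-- A circuit of a matroid: a minimal dependent set. -/
def Matroid.IsCircuitDef (M : Matroid α) (C : Set α) : Prop :=
  M.Dep C ∧ ∀ ⦃D⦄, D ⊂ C → M.Indep D

/-- Looplessness in the sense of the paper: no element is a loop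
(every singleton of the ground set is independent) and no element is a
coloop (no element lies in all bases). -/
def Matroid.PaperLoopless (M : Matroid α) : Prop :=
  ∀ e ∈ M.E, M.Indep {e} ∧ ∃ B, M.IsBase B ∧ e ∉ B

/-- The weight `x(B)` of a set of ground elements. -/
noncomputable def setWeight (x : α → ℝ) (B : Set α) : ℝ := ∑ᶠ e ∈ B, x e

/-- The min-max weight `μ_e(x)`: the minimum over circuits `C` containing `e`
of the maximum weight of an element of `C - e`. -/
noncomputable def muWeight (M : Matroid α) (x : α → ℝ) (e : α) : ℝ :=
  sInf {w | ∃ C, M.IsCircuitDef C ∧ e ∈ C ∧ w = sSup (x '' (C \ {e}))}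

/-- The bottleneck weight `b_e(x) = min {x(e), μ_e(x)}`. -/
noncomputable def bottleneck (M : Matroid α) (x : α → ℝ) (e : α) : ℝ :=
  min (x e) (muWeight M x e)

/-- The minimum weight of a basis of `M`. -/
noncomputable def mwb (M : Matroid α) (x : α → ℝ) : ℝ :=
  sInf {w | ∃ B, M.IsBase B ∧ w = setWeight x B}

/-- `B` is an `x`-optimal basis of `M`. -/
def IsOptimalBase (M : Matroid α) (x : α → ℝ) (B : Set α) : Prop :=
  M.IsBase B ∧ ∀ B', M.IsBase B' → setWeight x B ≤ setWeight x B'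

/-- Deletion of a single element. -/
noncomputable def Matroid.del (M : Matroid α) (e : α) : Matroid α :=
  M ↾ (M.E \ {e})

/-- Contraction of a single element, defined by duality: `M/e = (M✶ \ e)✶`. -/
noncomputable def Matroid.con (M : Matroid α) (e : α) : Matroid α :=
  ((M✶ ↾ (M.E \ {e}))✶)


section Aux

variable {M : Matroid α} {x : α → ℝ} {e : α}

lemma setWeight_insert (x : α → ℝ) {B : Set α} (hB : B.Finite) (he : e ∉ B) :
    setWeight x (insert e B) = x e + setWeight x B := finsum_mem_insert x he hB

lemma setWeight_remove (x : α → ℝ) {B : Set α} (hB : B.Finite) {f : α} (hf : f ∈ B) :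
    setWeight x B = x f + setWeight x (B \ {f}) := by
  have h : insert f (B \ {f}) = B := by
    rw [insert_diff_singleton, insert_eq_of_mem hf]
  rw [← h, setWeight_insert x (hB.diff (t := {f})) (by simp)]
  simp [h]

lemma setWeight_congr {x x' : α → ℝ} {B : Set α} (h : ∀ f ∈ B, x' f = x f) :
    setWeight x' B = setWeight x B := finsum_mem_congr rfl h

lemma base_of_indep_encard [M.Finite] {I B : Set α} (hI : M.Indep I) (hB : M.IsBase B)
    (h : B.encard ≤ I.encard) : M.IsBase I := by
  obtain ⟨B', hB', hIB'⟩ := hI.exists_isBase_superset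
  have h1 : B'.encard ≤ I.encard := (hB'.encard_eq_encard_of_isBase hB).le.trans h
  have : I = B' := (M.set_finite B' hB'.subset_ground).eq_of_subset_of_encard_le' hIB' h1
  rwa [this]

lemma exists_circuit_subset (M : Matroid α) [M.Finite] {X : Set α} (hX : M.Dep X) :
    ∃ C, C ⊆ X ∧ M.IsCircuitDef C := by
  have hsfin : {D | D ⊆ X ∧ M.Dep D}.Finite :=
    M.ground_finite.finite_subsets.subset (fun D hD => hD.1.trans hX.subset_ground)
  obtain ⟨C, hCs, hmin⟩ : ∃ C ∈ {D | D ⊆ X ∧ M.Dep D}, ∀ D ∈ {D | D ⊆ X ∧ M.Dep D}, D ≤ C → C = D := by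
    obtain ⟨C, hC⟩ := hsfin.isPWO.exists_minimal ⟨X, Subset.rfl, hX⟩
    exact ⟨C, hC.1, fun D hD hle => le_antisymm (hC.2 hD hle) hle⟩
  refine ⟨C, hCs.1, hCs.2, ?_⟩
  intro D hD
  rw [← not_dep_iff (hD.subset.trans hCs.2.subset_ground)]
  intro hdep
  exact hD.ne (hmin D ⟨hD.subset.trans hCs.1, hdep⟩ hD.le).symm

lemma Matroid.IsCircuitDef.diff_indep {C : Set α} (hC : M.IsCircuitDef C) {f : α} (hf : f ∈ C) :
    M.Indep (C \ {f}) := hC.2 (sdiff_singleton_ssubset.mpr hf)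

lemma Matroid.IsCircuitDef.mem_closure_diff {C : Set α} (hC : M.IsCircuitDef C) {f : α} (hf : f ∈ C) :
    f ∈ M.closure (C \ {f}) := by
  rw [(hC.diff_indep hf).mem_closure_iff]
  left
  rw [insert_diff_singleton, insert_eq_of_mem hf]
  exact hC.1

lemma exchange_in (M : Matroid α) [M.Finite] {B0 C : Set α} {e : α} (heB : e ∉ B0)
    (hB : M.IsBase (insert e B0)) (hC : M.IsCircuitDef C) (heC : e ∈ C) :
    ∃ f, f ∈ C \ {e} ∧ f ∉ B0 ∧ M.IsBase (insert f B0) := by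
  by_contra h
  push_neg at h
  have hB0 : M.Indep B0 := hB.indep.subset (subset_insert _ _)
  have hsub : C \ {e} ⊆ M.closure B0 := by
    intro f hf
    rcases em (f ∈ B0) with hfB | hfB
    · exact M.subset_closure B0 hB0.subset_ground hfB
    · rw [hB0.mem_closure_iff_of_notMem hfB,
        ← not_indep_iff (insert_subset (hC.1.subset_ground hf.1) hB0.subset_ground)]
      intro hind
      refine h f hf hfB (base_of_indep_encard hind hB ?_)
      rw [encard_insert_of_notMem heB, encard_insert_of_notMem hfB]
  have hcl : e ∈ M.closure B0 :=
    (M.closure_subset_closure_of_subset_closure hsub) (hC.mem_closure_diff heC)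
  rw [hB0.mem_closure_iff_of_notMem heB] at hcl
  exact hcl.not_indep hB.indep

lemma exchange_out (M : Matroid α) [M.Finite] {B C : Set α} {e f : α} (hB : M.IsBase B)
    (heB : e ∉ B) (heE : e ∈ M.E) (hC : M.IsCircuitDef C) (hCB : C ⊆ insert e B)
    (heC : e ∈ C) (hf : f ∈ C \ {e}) : M.IsBase (insert e (B \ {f})) := by
  have hfB : f ∈ B := by
    rcases hCB hf.1 with h | h
    · exact absurd h hf.2
    · exact h
  have hSE : insert e (B \ {f}) ⊆ M.E := insert_subset heE (diff_subset.trans hB.subset_ground)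
  have hfix : f ∈ M.closure (insert e (B \ {f})) := by
    refine M.closure_subset_closure ?_ (hC.mem_closure_diff hf.1)
    intro c hc
    rcases hCB hc.1 with rfl | hcB
    · exact mem_insert _ _
    · exact mem_insert_of_mem _ ⟨hcB, hc.2⟩
  have hBsub : B ⊆ M.closure (insert e (B \ {f})) := by
    intro b hb
    rcases em (b = f) with rfl | hbf
    · exact hfix
    · exact M.subset_closure _ hSE (mem_insert_of_mem _ ⟨hb, hbf⟩)
  have hsp : M.Spanning (insert e (B \ {f})) := by
    rw [spanning_iff_closure_eq hSE]
    apply subset_antisymm (M.closure_subset_ground _)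
    rw [← hB.closure_eq]
    exact M.closure_subset_closure_of_subset_closure hBsub
  obtain ⟨B', hB', hB'S⟩ := hsp.exists_isBase_subset
  have hcard : (insert e (B \ {f})).encard ≤ B'.encard := by
    rw [hB'.encard_eq_encard_of_isBase hB, encard_exchange heB hfB]
  have hEq : B' = insert e (B \ {f}) :=
    (M.set_finite B' hB'.subset_ground).eq_of_subset_of_encard_le hB'S hcard
  rwa [← hEq]

lemma mem_of_circuit_subset_insert [M.Finite] {B C : Set α} (hB : M.IsBase B)
    (hC : M.IsCircuitDef C) (hCB : C ⊆ insert e B) (heB : e ∉ B) : e ∈ C := by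
  by_contra heC
  have : C ⊆ B := fun c hc => by
    rcases hCB hc with rfl | h
    · exact absurd hc heC
    · exact h
  exact hC.1.not_indep (hB.indep.subset this)

lemma mwb_eq (M : Matroid α) [M.Finite] (hM : M.PaperLoopless) (x : α → ℝ) {e : α}
    (he : e ∈ M.E) :
    mwb M x = sInf {w | ∃ B, e ∉ B ∧ M.IsBase (insert e B) ∧ w = setWeight x B}
      + min (x e) (muWeight M x e) := by
  obtain ⟨hinde, Bc, hBc, heBc⟩ := hM e he
  set S : Set ℝ := {w | ∃ B, M.IsBase B ∧ w = setWeight x B} with hSdef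
  set S1 : Set ℝ := {w | ∃ B, e ∉ B ∧ M.IsBase (insert e B) ∧ w = setWeight x B} with hS1def
  set Sμ : Set ℝ := {w | ∃ C, M.IsCircuitDef C ∧ e ∈ C ∧ w = sSup (x '' (C \ {e}))} with hSμdef
  have hSfin : S.Finite := by
    apply (M.ground_finite.finite_subsets.image (setWeight x)).subset
    rintro w ⟨B, hB, rfl⟩
    exact mem_image_of_mem _ hB.subset_ground
  have hS1fin : S1.Finite := by
    apply (M.ground_finite.finite_subsets.image (setWeight x)).subset
    rintro w ⟨B, hB1, hB2, rfl⟩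
    exact mem_image_of_mem _ ((subset_insert e B).trans hB2.subset_ground)
  have hSμfin : Sμ.Finite := by
    apply (M.ground_finite.finite_subsets.image (fun C => sSup (x '' (C \ {e})))).subset
    rintro w ⟨C, hC, _, rfl⟩
    exact mem_image_of_mem _ hC.1.subset_ground
  have hSne : S.Nonempty := by
    obtain ⟨B, hB⟩ := M.exists_isBase
    exact ⟨setWeight x B, B, hB, rfl⟩
  have hS1ne : S1.Nonempty := by
    obtain ⟨B1, hB1, heB1⟩ := hinde.exists_isBase_superset
    rw [singleton_subset_iff] at heB1
    exact ⟨setWeight x (B1 \ {e}), B1 \ {e}, by simp,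
      by rw [insert_diff_singleton, insert_eq_of_mem heB1]; exact hB1, rfl⟩
  have hSμne : Sμ.Nonempty := by
    obtain ⟨C, hCB, hC⟩ := exists_circuit_subset M (hBc.insert_dep ⟨he, heBc⟩)
    exact ⟨_, C, hC, mem_of_circuit_subset_insert hBc hC hCB heBc, rfl⟩
  have hCdiff_ne : ∀ C, M.IsCircuitDef C → e ∈ C → (C \ {e}).Nonempty := by
    intro C hC heC
    rw [diff_nonempty]
    intro hsub
    have hCe : C = {e} := subset_antisymm hsub (singleton_subset_iff.mpr heC)
    exact hC.1.not_indep (hCe ▸ hinde)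
  -- attain sInf S1
  obtain ⟨B0, heB0, hB0, hw0⟩ := hS1ne.csInf_mem hS1fin
  have hB0fin : B0.Finite := M.set_finite B0 ((subset_insert e B0).trans hB0.subset_ground)
  apply le_antisymm
  · -- mwb ≤ sInf S1 + min
    have bound1 : mwb M x ≤ x e + sInf S1 := by
      have hmem : setWeight x (insert e B0) ∈ S := ⟨insert e B0, hB0, rfl⟩
      have := csInf_le hSfin.bddBelow hmem
      rw [setWeight_insert x hB0fin heB0] at this
      rw [hw0]
      exact this
    have bound2 : mwb M x ≤ muWeight M x e + sInf S1 := by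
      obtain ⟨C, hC, heC, hμ⟩ := hSμne.csInf_mem hSμfin
      obtain ⟨f, hf, hfB0, hfbase⟩ := exchange_in M heB0 hB0 hC heC
      have hxf : x f ≤ sSup (x '' (C \ {e})) :=
        le_csSup (((M.set_finite C hC.1.subset_ground).diff (t := {e})).image x).bddAbove
          (mem_image_of_mem x hf)
      have hmem : setWeight x (insert f B0) ∈ S := ⟨insert f B0, hfbase, rfl⟩
      have h1 := csInf_le hSfin.bddBelow hmem
      rw [setWeight_insert x hB0fin hfB0] at h1
      have hμdef : muWeight M x e = sInf Sμ := rfl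
      rw [hμdef, hμ, hw0, mwb, ← hSdef]
      linarith
    rcases le_total (x e) (muWeight M x e) with h | h
    · rw [min_eq_left h]; linarith
    · rw [min_eq_right h]; linarith
  · -- sInf S1 + min ≤ mwb
    obtain ⟨B, hB, hwB⟩ := hSne.csInf_mem hSfin
    have hBfin : B.Finite := M.set_finite B hB.subset_ground
    rcases em (e ∈ B) with heB | heB
    · have h1 : sInf S1 ≤ setWeight x (B \ {e}) := by
        apply csInf_le hS1fin.bddBelow
        refine ⟨B \ {e}, by simp, ?_, rfl⟩
        rw [insert_diff_singleton, insert_eq_of_mem heB]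
        exact hB
      have h2 : setWeight x B = x e + setWeight x (B \ {e}) := setWeight_remove x hBfin heB
      have h3 : min (x e) (muWeight M x e) ≤ x e := min_le_left _ _
      rw [mwb, ← hSdef, hwB, h2]
      linarith
    · obtain ⟨C, hCB, hC⟩ := exists_circuit_subset M (hB.insert_dep ⟨he, heB⟩)
      have heC : e ∈ C := mem_of_circuit_subset_insert hB hC hCB heB
      have hCfin : C.Finite := M.set_finite C hC.1.subset_ground
      have hsup := ((hCdiff_ne C hC heC).image x).csSup_mem ((hCfin.diff (t := {e})).image x)
      obtain ⟨f, hf, hxf⟩ := hsup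
      have hμle : muWeight M x e ≤ x f := by
        have hμdef : muWeight M x e = sInf Sμ := rfl
        have hh : sInf Sμ ≤ sSup (x '' (C \ {e})) :=
          csInf_le hSμfin.bddBelow ⟨C, hC, heC, rfl⟩
        rw [hμdef, hxf]
        exact hh
      have hfB : f ∈ B := by
        rcases hCB hf.1 with h | h
        · exact absurd h hf.2
        · exact h
      have hbase := exchange_out M hB heB he hC hCB heC hf
      have h1 : sInf S1 ≤ setWeight x (B \ {f}) :=
        csInf_le hS1fin.bddBelow ⟨B \ {f}, fun hmem => heB (diff_subset hmem), hbase, rfl⟩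
      have h2 : setWeight x B = x f + setWeight x (B \ {f}) := setWeight_remove x hBfin hfB
      have h3 : min (x e) (muWeight M x e) ≤ muWeight M x e := min_le_right _ _
      rw [mwb, ← hSdef, hwB, h2]
      linarith


end Aux

/-- postoptimality for a change of a single weight. -/
theorem stmt12 (M : Matroid α) [M.Finite] (hM : M.PaperLoopless)
    (x x' : α → ℝ) {e : α} (he : e ∈ M.E)
    (hdiff : ∀ f, f ≠ e → x' f = x f) :
    mwb M x' - mwb M x = bottleneck M x' e - bottleneck M x e := by
  have hA := mwb_eq M hM x he
  have hA' := mwb_eq M hM x' he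
  have hS1eq : {w | ∃ B, e ∉ B ∧ M.IsBase (insert e B) ∧ w = setWeight x' B}
      = {w | ∃ B, e ∉ B ∧ M.IsBase (insert e B) ∧ w = setWeight x B} := by
    ext w
    constructor
    · rintro ⟨B, h1, h2, rfl⟩
      exact ⟨B, h1, h2, setWeight_congr
        (fun f hf => hdiff f (fun h => h1 (h ▸ hf)))⟩
    · rintro ⟨B, h1, h2, rfl⟩
      exact ⟨B, h1, h2, (setWeight_congr
        (fun f hf => hdiff f (fun h => h1 (h ▸ hf)))).symm⟩
  have hμeq : muWeight M x' e = muWeight M x e := by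
    unfold muWeight
    congr 1
    ext w
    have himg : ∀ C : Set α, x' '' (C \ {e}) = x '' (C \ {e}) := fun C =>
      image_congr (fun a ha => hdiff a ha.2)
    constructor
    · rintro ⟨C, hC, heC, rfl⟩
      exact ⟨C, hC, heC, by rw [himg]⟩
    · rintro ⟨C, hC, heC, rfl⟩
      exact ⟨C, hC, heC, by rw [himg]⟩
  rw [hA, hA', hS1eq]
  unfold bottleneck
  rw [hμeq]
  ring
end

section
/- Persistency: Let M be a loopless matroid and x : E → ℝ a weighting. An element e belongs to every x-optimal basis if and only if μ_e(x) > x(e); e belongs to no x-optimal basis if and only if μ_e(x) < x(e); and e belongs to some but not all x-optimal bases if and only if μ_e(x) = x(e). -/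
open Matroid Set

variable {α : Type*}

section aux
variable {M : Matroid α} {x : α → ℝ} {B C D : Set α} {e f : α}

lemma setWeight_eq (hB : B.Finite) : setWeight x B = ∑ a ∈ hB.toFinset, x a := by
  rw [setWeight, ← finsum_mem_coe_finset, hB.coe_toFinset]

lemma setWeight_exchange (hB : B.Finite) (hf : f ∈ B) (he : e ∉ B) :
    setWeight x (insert e (B \ {f})) = setWeight x B - x f + x e := by
  classical
  have h1 : (insert e (B \ {f})) = ↑(insert e (hB.toFinset.erase f)) := by
    simp [Finset.coe_erase, hB.coe_toFinset]
  have he2 : e ∉ hB.toFinset.erase f := by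
    simp only [Finset.mem_erase, hB.mem_toFinset]
    tauto
  rw [setWeight, h1, finsum_mem_coe_finset, Finset.sum_insert he2,
    Finset.sum_erase_eq_sub (by simpa using hf), setWeight_eq hB]
  ring

lemma Matroid.IsCircuitDef.diff_indep_s18 (h : M.IsCircuitDef C) (he : e ∈ C) : M.Indep (C \ {e}) :=
  h.2 (Set.sdiff_singleton_ssubset.2 he)

lemma Matroid.IsCircuitDef.mem_closure (h : M.IsCircuitDef C) (he : e ∈ C) : e ∈ M.closure (C \ {e}) := by
  have hi := h.diff_indep_s18 he
  have hd : M.Dep (insert e (C \ {e})) := by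
    rw [insert_diff_singleton, insert_eq_of_mem he]; exact h.1
  exact (hi.insert_dep_iff.1 hd).1

lemma exists_circuit_subset_s18 (hD : M.Dep D) (hfin : D.Finite) :
    ∃ C, M.IsCircuitDef C ∧ C ⊆ D := by
  classical
  have hS : {C | C ⊆ D ∧ M.Dep C}.Finite := hfin.finite_subsets.subset fun C hC => hC.1
  obtain ⟨C, hCmem, hCmin⟩ := Set.Finite.exists_minimalFor id _ hS ⟨D, Subset.rfl, hD⟩
  refine ⟨C, ⟨hCmem.2, fun D' hD' => ?_⟩, hCmem.1⟩
  by_contra hind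
  have hD'dep : M.Dep D' := (M.dep_iff).2 ⟨hind, hD'.subset.trans hCmem.2.subset_ground⟩
  have := hCmin ⟨hD'.subset.trans hCmem.1, hD'dep⟩ hD'.subset
  exact hD'.ne (hD'.subset.antisymm this)

lemma exists_fund_circuit (hB : M.IsBase B) (hBfin : B.Finite) (he : e ∈ M.E) (heB : e ∉ B) :
    ∃ C, M.IsCircuitDef C ∧ e ∈ C ∧ C ⊆ insert e B := by
  obtain ⟨C, hC, hCD⟩ := exists_circuit_subset_s18 (hB.insert_dep ⟨he, heB⟩) (hBfin.insert e)
  refine ⟨C, hC, ?_, hCD⟩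
  by_contra heC
  exact hC.1.not_indep (hB.indep.subset fun a ha =>
    ((hCD ha).resolve_left (by rintro rfl; exact heC ha)))

lemma circuit_exchange_base (hB : M.IsBase B) (heB : e ∉ B) (hC : M.IsCircuitDef C)
    (heC : e ∈ C) (hCB : C ⊆ insert e B) (hf : f ∈ C) (hfe : f ≠ e) :
    M.IsBase (insert e (B \ {f})) := by
  have hfB : f ∈ B := (hCB hf).resolve_left hfe
  have hXi : M.Indep (B \ {f}) := hB.indep.subset diff_subset
  have heE : e ∈ M.E := hC.1.subset_ground heC
  by_cases hcl : e ∈ M.closure (B \ {f})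
  · exfalso
    have hf2 : f ∈ M.closure (C \ {f}) := hC.mem_closure hf
    have hsub : C \ {f} ⊆ insert e (B \ {f}) := by
      rintro a ⟨haC, haf⟩
      rcases hCB haC with rfl | h
      · exact mem_insert _ _
      · exact mem_insert_of_mem _ ⟨h, haf⟩
    have h3 : f ∈ M.closure (insert e (B \ {f})) := M.closure_subset_closure hsub hf2
    rw [closure_insert_eq_of_mem_closure hcl] at h3
    exact hB.indep.notMem_closure_sdiff_of_mem hfB h3
  · have hind : M.Indep (insert e (B \ {f})) := by
      rw [hXi.insert_indep_iff_of_notMem (fun h => heB h.1)]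
      exact ⟨heE, hcl⟩
    exact hB.exchange_isBase_of_indep heB hind

lemma exists_exchange_out (hB : M.IsBase B) (heB : e ∈ B) (hC : M.IsCircuitDef C) (heC : e ∈ C) :
    ∃ f ∈ C, f ∉ B ∧ M.IsBase (insert f (B \ {e})) := by
  by_contra h
  push_neg at h
  have hXi : M.Indep (B \ {e}) := hB.indep.subset diff_subset
  have hsub : C \ {e} ⊆ M.closure (B \ {e}) := by
    rintro f ⟨hfC, hfe⟩
    by_cases hfB : f ∈ B
    · exact M.subset_closure _ (diff_subset.trans hB.subset_ground) ⟨hfB, hfe⟩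
    · by_contra hcl
      have hind : M.Indep (insert f (B \ {e})) := by
        rw [hXi.insert_indep_iff_of_notMem (fun h' => hfB h'.1)]
        exact ⟨hC.1.subset_ground hfC, hcl⟩
      exact h f hfC hfB (hB.exchange_isBase_of_indep hfB hind)
  exact hB.indep.notMem_closure_sdiff_of_mem heB
    (M.closure_subset_closure_of_subset_closure hsub (hC.mem_closure heC))

end aux

section aux2
variable {M : Matroid α} {x : α → ℝ} {B : Set α} {e : α}

lemma exists_optimalBase (M : Matroid α) [M.Finite] (x : α → ℝ) :
    ∃ B, IsOptimalBase M x B := by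
  obtain ⟨B₀, hB₀⟩ := M.exists_isBase
  have hWfin : {w | ∃ B, M.IsBase B ∧ w = setWeight x B}.Finite := by
    have hsub : {w | ∃ B, M.IsBase B ∧ w = setWeight x B} ⊆
        setWeight x '' {B | B ⊆ M.E} := by
      rintro w ⟨B, hB, rfl⟩
      exact ⟨B, hB.subset_ground, rfl⟩
    exact (M.ground_finite.finite_subsets.image _).subset hsub
  have hWne : {w | ∃ B, M.IsBase B ∧ w = setWeight x B}.Nonempty := ⟨_, B₀, hB₀, rfl⟩
  obtain ⟨B, hB, hw⟩ := hWne.csInf_mem hWfin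
  refine ⟨B, hB, fun B' hB' => ?_⟩
  rw [← hw]
  exact csInf_le hWfin.bddBelow ⟨B', hB', rfl⟩

end aux2

/-- persistency. -/
theorem stmt18 (M : Matroid α) [M.Finite] (hM : M.PaperLoopless)
    (x : α → ℝ) {e : α} (he : e ∈ M.E) :
    ((∀ B, IsOptimalBase M x B → e ∈ B) ↔ x e < muWeight M x e) ∧
    ((∀ B, IsOptimalBase M x B → e ∉ B) ↔ muWeight M x e < x e) ∧
    (((∃ B, IsOptimalBase M x B ∧ e ∈ B) ∧ (∃ B, IsOptimalBase M x B ∧ e ∉ B)) ↔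
      muWeight M x e = x e) := by
  classical
  have hEfin : M.E.Finite := M.ground_finite
  have hmu : muWeight M x e =
      sInf {w | ∃ C, M.IsCircuitDef C ∧ e ∈ C ∧ w = sSup (x '' (C \ {e}))} := rfl
  have hVfin : {w | ∃ C, M.IsCircuitDef C ∧ e ∈ C ∧ w = sSup (x '' (C \ {e}))}.Finite := by
    have hsub : {w | ∃ C, M.IsCircuitDef C ∧ e ∈ C ∧ w = sSup (x '' (C \ {e}))} ⊆
        (fun C => sSup (x '' (C \ {e}))) '' {C | C ⊆ M.E} := by
      rintro w ⟨C, hC, -, rfl⟩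
      exact ⟨C, hC.1.subset_ground, rfl⟩
    exact ((hEfin.finite_subsets).image _).subset hsub
  obtain ⟨B₂, hB₂, heB₂⟩ := (hM e he).2
  obtain ⟨C₀, hC₀, heC₀, hC₀s⟩ :=
    exists_fund_circuit hB₂ (hEfin.subset hB₂.subset_ground) he heB₂
  have hVne : {w | ∃ C, M.IsCircuitDef C ∧ e ∈ C ∧ w = sSup (x '' (C \ {e}))}.Nonempty :=
    ⟨_, C₀, hC₀, heC₀, rfl⟩
  have hCfacts : ∀ C, M.IsCircuitDef C → e ∈ C → (C \ {e}).Nonempty ∧ (C \ {e}).Finite := by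
    intro C hC heC
    refine ⟨?_, (hEfin.subset hC.1.subset_ground).subset diff_subset⟩
    rw [Set.nonempty_iff_ne_empty]
    intro h0
    have hCe : C = {e} := by
      rcases subset_singleton_iff_eq.1 (diff_eq_empty.1 h0) with h | h
      · exact absurd (h ▸ heC) (notMem_empty e)
      · exact h
    exact hC.1.not_indep (hCe ▸ (hM e he).1)
  have keyOut : ∀ B, IsOptimalBase M x B → e ∈ B → ∀ C, M.IsCircuitDef C → e ∈ C →
      ∃ f, f ≠ e ∧ f ∉ B ∧ x e ≤ x f ∧ x f ≤ sSup (x '' (C \ {e})) ∧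
        M.IsBase (insert f (B \ {e})) ∧
        setWeight x (insert f (B \ {e})) = setWeight x B - x e + x f := by
    intro B hB heB C hC heC
    obtain ⟨f, hfC, hfB, hBase⟩ := exists_exchange_out hB.1 heB hC heC
    have hfe : f ≠ e := by rintro rfl; exact hfB heB
    have hBfin : B.Finite := hEfin.subset hB.1.subset_ground
    have hw := setWeight_exchange (x := x) hBfin heB hfB
    have hle := hB.2 _ hBase
    rw [hw] at hle
    have hxef : x e ≤ x f := by linarith
    have hfsup : x f ≤ sSup (x '' (C \ {e})) :=
      le_csSup (((hCfacts C hC heC).2.image x).bddAbove) ⟨f, ⟨hfC, hfe⟩, rfl⟩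
    exact ⟨f, hfe, hfB, hxef, hfsup, hBase, hw⟩
  have keyIn : ∀ B, IsOptimalBase M x B → e ∉ B →
      ∃ C, M.IsCircuitDef C ∧ e ∈ C ∧ C ⊆ insert e B ∧
        ∀ f ∈ C \ {e}, x f ≤ x e ∧ M.IsBase (insert e (B \ {f})) ∧
          setWeight x (insert e (B \ {f})) = setWeight x B - x f + x e := by
    intro B hB heB
    have hBfin : B.Finite := hEfin.subset hB.1.subset_ground
    obtain ⟨C, hC, heC, hCs⟩ := exists_fund_circuit hB.1 hBfin he heB
    refine ⟨C, hC, heC, hCs, ?_⟩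
    rintro f ⟨hfC, hfe⟩
    have hfe' : f ≠ e := by simpa using hfe
    have hBase := circuit_exchange_base hB.1 heB hC heC hCs hfC hfe'
    have hfB : f ∈ B := (hCs hfC).resolve_left hfe'
    have hw := setWeight_exchange (x := x) hBfin hfB heB
    have hle := hB.2 _ hBase
    rw [hw] at hle
    exact ⟨by linarith, hBase, hw⟩
  have key1 : (∀ B, IsOptimalBase M x B → e ∈ B) → x e < muWeight M x e := by
    intro hall
    obtain ⟨Bo, hBo⟩ := exists_optimalBase M x
    have heBo := hall Bo hBo
    obtain ⟨C, hC, heC, hEq⟩ := hVne.csInf_mem hVfin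
    obtain ⟨f, hfe, hfB, hxef, hfsup, hBase, hw⟩ := keyOut Bo hBo heBo C hC heC
    have hlt : x e < x f := by
      rcases lt_or_eq_of_le hxef with h | h
      · exact h
      · exfalso
        have hopt' : IsOptimalBase M x (insert f (Bo \ {e})) := by
          refine ⟨hBase, fun B' hB' => ?_⟩
          have := hBo.2 B' hB'
          rw [hw]
          linarith
        rcases mem_insert_iff.1 (hall _ hopt') with h' | h'
        · exact hfe h'.symm
        · exact h'.2 rfl
    rw [hmu, hEq]
    linarith
  have key2 : (∀ B, IsOptimalBase M x B → e ∉ B) → muWeight M x e < x e := by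
    intro hnone
    obtain ⟨Bo, hBo⟩ := exists_optimalBase M x
    have heBo := hnone Bo hBo
    obtain ⟨C, hC, heC, hCs, hF⟩ := keyIn Bo hBo heBo
    have hne := (hCfacts C hC heC).1
    have hfin := (hCfacts C hC heC).2
    obtain ⟨f, hf, hfx⟩ := (hne.image x).csSup_mem (hfin.image x)
    have hstrict : x f < x e := by
      obtain ⟨hle, hBase, hw⟩ := hF f hf
      rcases lt_or_eq_of_le hle with h | h
      · exact h
      · exfalso
        have hopt' : IsOptimalBase M x (insert e (Bo \ {f})) := by
          refine ⟨hBase, fun B' hB' => ?_⟩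
          have := hBo.2 B' hB'
          rw [hw]
          linarith
        exact hnone _ hopt' (mem_insert _ _)
    have hmle : muWeight M x e ≤ sSup (x '' (C \ {e})) := by
      rw [hmu]
      exact csInf_le hVfin.bddBelow ⟨C, hC, heC, rfl⟩
    rw [← hfx] at hmle
    linarith
  have key3 : (∃ B, IsOptimalBase M x B ∧ e ∈ B) → (∃ B, IsOptimalBase M x B ∧ e ∉ B) →
      muWeight M x e = x e := by
    rintro ⟨B1, hB1, heB1⟩ ⟨B2', hB2', heB2'⟩
    have hle : muWeight M x e ≤ x e := by
      obtain ⟨C, hC, heC, hCs, hF⟩ := keyIn B2' hB2' heB2'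
      have hsuple : sSup (x '' (C \ {e})) ≤ x e := by
        apply csSup_le ((hCfacts C hC heC).1.image x)
        rintro w ⟨f, hf, rfl⟩
        exact (hF f hf).1
      rw [hmu]
      exact le_trans (csInf_le hVfin.bddBelow ⟨C, hC, heC, rfl⟩) hsuple
    have hge : x e ≤ muWeight M x e := by
      rw [hmu]
      apply le_csInf hVne
      rintro w ⟨C, hC, heC, rfl⟩
      obtain ⟨f, hfe, hfB, hxef, hfsup, -, -⟩ := keyOut B1 hB1 heB1 C hC heC
      linarith
    exact le_antisymm hle hge
  refine ⟨⟨key1, ?_⟩, ⟨key2, ?_⟩, ⟨fun h => key3 h.1 h.2, ?_⟩⟩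
  · intro hlt B hB
    by_contra heB
    by_cases hex : ∃ B', IsOptimalBase M x B' ∧ e ∈ B'
    · have := key3 hex ⟨B, hB, heB⟩
      linarith
    · push_neg at hex
      have := key2 hex
      linarith
  · intro hlt B hB heB
    by_cases hex : ∃ B', IsOptimalBase M x B' ∧ e ∉ B'
    · have := key3 ⟨B, hB, heB⟩ hex
      linarith
    · push_neg at hex
      have := key1 hex
      linarith
  · intro heq
    by_cases hA : ∀ B, IsOptimalBase M x B → e ∈ B
    · have := key1 hA; linarith
    by_cases hBn : ∀ B, IsOptimalBase M x B → e ∉ B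
    · have := key2 hBn; linarith
    push_neg at hA hBn
    obtain ⟨Ba, hBa, heBa⟩ := hA
    obtain ⟨Bb, hBb, heBb⟩ := hBn
    exact ⟨⟨Bb, hBb, heBb⟩, ⟨Ba, hBa, heBa⟩⟩
end
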